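/- Let a > 0, b ≥ 0, u₀ ∈ ℝ, and let c₀ be the unique positive root of x(a x² + 2b) = 4. Let u be an axisymmetric stationary rotating profile on [0, c₀) with u(0) = u₀, i.e. u is differentiable on [0, c₀) and u'(r)/√(1 + u'(r)²) = r(a r² + 2b)/4 for all r ∈ [0, c₀). Then u(r) ≤ u₀ + c₀ for all r ∈ [0, c₀), and the area integral satisfies 2π ∫₀^{c₀} r √(1 + u'(r)²) dr < 2π c₀². -/

import Mathlib

open Set MeasureTheory

private lemma aux_inv_sqrt_mono {x y : ℝ} (hx : 0 ≤ x) (hxy : x ≤ y) (hy : y < 1) :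
    1 / Real.sqrt (1 - x ^ 2) ≤ 1 / Real.sqrt (1 - y ^ 2) := by
  have h1 : (0:ℝ) < 1 - y ^ 2 := by nlinarith
  have h2 : 1 - y ^ 2 ≤ 1 - x ^ 2 := by nlinarith
  have hpos : 0 < Real.sqrt (1 - y ^ 2) := Real.sqrt_pos.mpr h1
  exact one_div_le_one_div_of_le hpos (Real.sqrt_le_sqrt h2)

private lemma aux_inv_sqrt_strict {x y : ℝ} (hx : 0 ≤ x) (hxy : x < y) (hy : y < 1) :
    1 / Real.sqrt (1 - x ^ 2) < 1 / Real.sqrt (1 - y ^ 2) := by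
  have h1 : (0:ℝ) < 1 - y ^ 2 := by nlinarith
  have h2 : 1 - y ^ 2 < 1 - x ^ 2 := by nlinarith
  have hpos : 0 < Real.sqrt (1 - y ^ 2) := Real.sqrt_pos.mpr h1
  exact one_div_lt_one_div_of_lt hpos (Real.sqrt_lt_sqrt h1.le h2)

/-- Remark after Theorem 4.7: for a closed axisymmetric drop of type I,
`u(c₀) ≤ u₀ + c₀` (i.e. `u ≤ u₀ + c₀` on `[0, c₀)`) and the area of the lower half
satisfies `2π ∫₀^{c₀} r√(1+u'²) dr < 2π c₀²`. -/
theorem stmt_14 (a b u₀ c₀ : ℝ) (ha : 0 < a) (hb : 0 ≤ b)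
    (hc₀ : 0 < c₀) (hroot : c₀ * (a * c₀ ^ 2 + 2 * b) = 4)
    (u u' : ℝ → ℝ)
    (hu : ∀ r ∈ Ico (0:ℝ) c₀, HasDerivAt u (u' r) r)
    (heq : ∀ r ∈ Ico (0:ℝ) c₀, u' r / Real.sqrt (1 + u' r ^ 2) = r * (a * r ^ 2 + 2 * b) / 4)
    (h0 : u 0 = u₀) :
    (∀ r ∈ Ico (0:ℝ) c₀, u r ≤ u₀ + c₀) ∧
      IntegrableOn (fun r => r * Real.sqrt (1 + u' r ^ 2)) (Ioo 0 c₀) ∧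
      2 * Real.pi * ∫ r in Ioo (0:ℝ) c₀, r * Real.sqrt (1 + u' r ^ 2) <
        2 * Real.pi * c₀ ^ 2 := by
  set F : ℝ → ℝ := fun r => r * (a * r ^ 2 + 2 * b) / 4 with hF
  set w : ℝ → ℝ := fun r => Real.sqrt (1 - (r / c₀) ^ 2) with hw
  -- basic bounds on F
  have hF0 : ∀ r ∈ Ico (0:ℝ) c₀, 0 ≤ F r := by
    intro r hr
    have := hr.1
    have h1 : 0 ≤ a * r ^ 2 + 2 * b := by positivity
    simp only [hF]
    positivity
  have hFle : ∀ r ∈ Ico (0:ℝ) c₀, F r ≤ r / c₀ := by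
    intro r hr
    rw [le_div_iff₀ hc₀]
    have h1 : 0 ≤ r * (c₀ * (a * ((c₀ + r) * (c₀ - r)))) := by
      have := hr.1
      have h2 : 0 ≤ c₀ - r := by linarith [hr.2]
      positivity
    have h3 : r * (c₀ * (a * c₀ ^ 2 + 2 * b)) = r * 4 := by rw [hroot]
    simp only [hF]
    nlinarith [h1, h3]
  have hFlt : ∀ r ∈ Ioo (0:ℝ) c₀, F r < r / c₀ := by
    intro r hr
    rw [lt_div_iff₀ hc₀]
    have h1 : 0 < r * (c₀ * (a * ((c₀ + r) * (c₀ - r)))) := by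
      have := hr.1
      have h2 : 0 < c₀ - r := by linarith [hr.2]
      positivity
    have h3 : r * (c₀ * (a * c₀ ^ 2 + 2 * b)) = r * 4 := by rw [hroot]
    simp only [hF]
    nlinarith [h1, h3]
  have hrclt1 : ∀ r ∈ Ico (0:ℝ) c₀, r / c₀ < 1 := fun r hr => (div_lt_one hc₀).mpr hr.2
  have hrc0 : ∀ r ∈ Ico (0:ℝ) c₀, 0 ≤ r / c₀ := fun r hr => div_nonneg hr.1 hc₀.le
  -- the key identity: √(1+u'²) = 1/√(1-F²)
  have key : ∀ r ∈ Ico (0:ℝ) c₀,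
      Real.sqrt (1 + u' r ^ 2) = 1 / Real.sqrt (1 - F r ^ 2) ∧
      u' r = F r * Real.sqrt (1 + u' r ^ 2) := by
    intro r hr
    have hs0 : (0:ℝ) ≤ 1 + u' r ^ 2 := by positivity
    have hspos : 0 < Real.sqrt (1 + u' r ^ 2) := Real.sqrt_pos.mpr (by positivity)
    have hu'eq : u' r = F r * Real.sqrt (1 + u' r ^ 2) := by
      have h := heq r hr
      exact (div_eq_iff hspos.ne').mp h
    have hsq : Real.sqrt (1 + u' r ^ 2) ^ 2 = 1 + u' r ^ 2 := Real.sq_sqrt hs0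
    have hF1 : F r < 1 := lt_of_le_of_lt (hFle r hr) (hrclt1 r hr)
    have hden : (0:ℝ) < 1 - F r ^ 2 := by nlinarith [hF0 r hr]
    have h3 : u' r ^ 2 = F r ^ 2 * (1 + u' r ^ 2) := by
      conv_lhs => rw [hu'eq]
      rw [mul_pow, hsq]
    have hs2 : Real.sqrt (1 + u' r ^ 2) ^ 2 = 1 / (1 - F r ^ 2) := by
      rw [hsq, eq_div_iff hden.ne']
      linear_combination h3
    refine ⟨?_, hu'eq⟩
    have := Real.sqrt_sq hspos.le
    rw [← this, hs2, one_div, Real.sqrt_inv, one_div]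
  -- derived bounds
  have hwpos : ∀ r ∈ Ico (0:ℝ) c₀, 0 < w r := by
    intro r hr
    exact Real.sqrt_pos.mpr (by nlinarith [hrc0 r hr, hrclt1 r hr])
  have hsle : ∀ r ∈ Ico (0:ℝ) c₀, Real.sqrt (1 + u' r ^ 2) ≤ 1 / w r := by
    intro r hr
    rw [(key r hr).1]
    exact aux_inv_sqrt_mono (hF0 r hr) (hFle r hr) (hrclt1 r hr)
  have hu'le : ∀ r ∈ Ioo (0:ℝ) c₀, u' r ≤ (r / c₀) / w r := by
    intro r hr
    have hr' : r ∈ Ico (0:ℝ) c₀ := ⟨hr.1.le, hr.2⟩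
    rw [(key r hr').2]
    calc F r * Real.sqrt (1 + u' r ^ 2) ≤ (r / c₀) * (1 / w r) := by
          apply mul_le_mul (hFle r hr') (hsle r hr')
            (Real.sqrt_nonneg _) (hrc0 r hr')
      _ = (r / c₀) / w r := by ring
  -- Part 1: u ≤ u₀ + c₀ via comparison with the sphere profile
  have hwc : Continuous w :=
    Real.continuous_sqrt.comp (continuous_const.sub ((continuous_id.div_const c₀).pow 2))
  have hwderiv : ∀ x ∈ Ioo (0:ℝ) c₀, HasDerivAt w (-2 * x / c₀ ^ 2 / (2 * w x)) x := by
    intro x hx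
    have h1 : HasDerivAt (fun r : ℝ => 1 - (r / c₀) ^ 2) (-2 * x / c₀ ^ 2) x := by
      have : HasDerivAt (fun r : ℝ => r / c₀) (1 / c₀) x := (hasDerivAt_id x).div_const c₀
      have h2 : HasDerivAt (fun r : ℝ => 1 - (r / c₀) ^ 2) (-((2:ℕ) * (x / c₀) ^ (2 - 1) * (1 / c₀))) x :=
        ((this.pow 2).const_sub 1)
      convert h2 using 1
      rw [show (2:ℕ) - 1 = 1 from rfl, pow_one]
      push_cast
      field_simp [hc₀.ne']
    have hne : (1 - (x / c₀) ^ 2) ≠ 0 := by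
      have := hwpos x ⟨hx.1.le, hx.2⟩
      simp only [hw] at this
      intro h
      rw [h] at this
      simp at this
    exact h1.sqrt hne
  have part1 : ∀ r ∈ Ico (0:ℝ) c₀, u r ≤ u₀ + c₀ := by
    have hanti : AntitoneOn (fun r => u r + c₀ * w r) (Ico 0 c₀) := by
      apply antitoneOn_of_deriv_nonpos (convex_Ico 0 c₀)
      · exact fun x hx => ((hu x hx).continuousAt.continuousWithinAt.add
          ((hwc.continuousAt.continuousWithinAt).const_smul c₀))
      · intro x hx
        rw [interior_Ico] at hx
        exact ((hu x ⟨hx.1.le, hx.2⟩).add ((hwderiv x hx).const_mul c₀)).differentiableAt.differentiableWithinAt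
      · intro x hx
        rw [interior_Ico] at hx
        have hd : HasDerivAt (fun r => u r + c₀ * w r)
            (u' x + c₀ * (-2 * x / c₀ ^ 2 / (2 * w x))) x :=
          (hu x ⟨hx.1.le, hx.2⟩).add ((hwderiv x hx).const_mul c₀)
        rw [hd.deriv]
        have hwx := hwpos x ⟨hx.1.le, hx.2⟩
        have h1 : c₀ * (-2 * x / c₀ ^ 2 / (2 * w x)) = -((x / c₀) / w x) := by
          field_simp
        rw [h1]
        have := hu'le x hx
        linarith
    intro r hr
    have h00 : (0:ℝ) ∈ Ico (0:ℝ) c₀ := ⟨le_refl 0, hc₀⟩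
    have h2 : u r + c₀ * w r ≤ u 0 + c₀ * w 0 := hanti h00 hr hr.1
    have hw0 : w 0 = 1 := by simp [hw]
    rw [hw0] at h2
    have hwr : 0 ≤ w r := (hwpos r hr).le
    nlinarith
  refine ⟨part1, ?_⟩
  -- Part 2: integrability and the integral bound
  set g : ℝ → ℝ := fun r => r / c₀ / w r * c₀ with hg
  set G : ℝ → ℝ := fun r => -(c₀ ^ 2 * w r) with hG
  have hGderiv : ∀ x ∈ Ioo (0:ℝ) c₀, HasDerivAt G (g x) x := by
    intro x hx
    have h1 : HasDerivAt G (-(c₀ ^ 2 * (-2 * x / c₀ ^ 2 / (2 * w x)))) x :=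
      ((hwderiv x hx).const_mul (c₀ ^ 2)).neg
    convert h1 using 1
    have hwx := hwpos x ⟨hx.1.le, hx.2⟩
    simp only [hg]
    field_simp
  have hgnonneg : ∀ x ∈ Ioo (0:ℝ) c₀, 0 ≤ g x := by
    intro x hx
    have hwx := hwpos x ⟨hx.1.le, hx.2⟩
    simp only [hg]
    exact mul_nonneg (div_nonneg (div_nonneg hx.1.le hc₀.le) hwx.le) hc₀.le
  have hGcont : ContinuousOn G (Icc 0 c₀) := ((hwc.const_smul (c₀^2)).neg).continuousOn
  have hgint : IntegrableOn g (Ioc 0 c₀) :=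
    intervalIntegral.integrableOn_deriv_of_nonneg hGcont hGderiv hgnonneg
  have hgintIoo : IntegrableOn g (Ioo 0 c₀) := hgint.mono_set Ioo_subset_Ioc_self
  have hgval : ∫ r in Ioo (0:ℝ) c₀, g r = c₀ ^ 2 := by
    have h1 : ∫ y in (0:ℝ)..c₀, g y = G c₀ - G 0 := by
      apply intervalIntegral.integral_eq_sub_of_hasDeriv_right_of_le hc₀.le hGcont
        (fun x hx => (hGderiv x hx).hasDerivWithinAt)
      exact (intervalIntegrable_iff_integrableOn_Ioc_of_le hc₀.le).mpr hgint
    have hGc : G c₀ = 0 := by simp [hG, hw, div_self hc₀.ne']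
    have hG0 : G 0 = -c₀ ^ 2 := by simp [hG, hw]
    rw [intervalIntegral.integral_of_le hc₀.le, integral_Ioc_eq_integral_Ioo] at h1
    rw [h1, hGc, hG0]
    ring
  -- the integrand coincides on Ioo with a continuous function h̃
  set h : ℝ → ℝ := fun r => r * (1 / Real.sqrt (1 - F r ^ 2)) with hh
  have hEq : EqOn (fun r => r * Real.sqrt (1 + u' r ^ 2)) h (Ioo 0 c₀) := by
    intro r hr
    simp only [hh]
    rw [(key r ⟨hr.1.le, hr.2⟩).1]
  have hFc : Continuous F :=
    (continuous_id.mul ((continuous_const.mul (continuous_pow 2)).add continuous_const)).div_const 4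
  have hhcont : ContinuousOn h (Ioo 0 c₀) := by
    apply ContinuousOn.mul continuousOn_id
    apply ContinuousOn.div continuousOn_const
      ((Real.continuous_sqrt.comp (continuous_const.sub (hFc.pow 2))).continuousOn)
    · intro r hr
      have hF1 : F r < 1 := lt_of_le_of_lt (hFle r ⟨hr.1.le, hr.2⟩) (hrclt1 r ⟨hr.1.le, hr.2⟩)
      have hden : (0:ℝ) < 1 - F r ^ 2 := by nlinarith [hF0 r ⟨hr.1.le, hr.2⟩]
      exact (Real.sqrt_pos.mpr hden).ne'
  have hhle : ∀ r ∈ Ioo (0:ℝ) c₀, h r ≤ g r := by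
    intro r hr
    have hr' : r ∈ Ico (0:ℝ) c₀ := ⟨hr.1.le, hr.2⟩
    simp only [hh, hg]
    have h1 : 1 / Real.sqrt (1 - F r ^ 2) ≤ 1 / Real.sqrt (1 - (r / c₀) ^ 2) :=
      aux_inv_sqrt_mono (hF0 r hr') (hFle r hr') (hrclt1 r hr')
    have hwx := hwpos r hr'
    have h2 : r / c₀ / w r * c₀ = r * (1 / w r) := by field_simp
    rw [h2]
    simp only [hw]
    exact mul_le_mul_of_nonneg_left h1 hr.1.le
  have hhlt : ∀ r ∈ Ioo (0:ℝ) c₀, h r < g r := by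
    intro r hr
    have hr' : r ∈ Ico (0:ℝ) c₀ := ⟨hr.1.le, hr.2⟩
    simp only [hh, hg]
    have h1 : 1 / Real.sqrt (1 - F r ^ 2) < 1 / Real.sqrt (1 - (r / c₀) ^ 2) :=
      aux_inv_sqrt_strict (hF0 r hr') (hFlt r hr) (hrclt1 r hr')
    have hwx := hwpos r hr'
    have h2 : r / c₀ / w r * c₀ = r * (1 / w r) := by field_simp
    rw [h2]
    simp only [hw]
    exact mul_lt_mul_of_pos_left h1 hr.1
  have hhnonneg : ∀ r ∈ Ioo (0:ℝ) c₀, 0 ≤ h r := by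
    intro r hr
    simp only [hh]
    exact mul_nonneg hr.1.le (by positivity)
  have hhint : IntegrableOn h (Ioo 0 c₀) := by
    apply Integrable.mono hgintIoo
      (hhcont.aestronglyMeasurable measurableSet_Ioo)
    filter_upwards [ae_restrict_mem measurableSet_Ioo] with r hr
    rw [Real.norm_of_nonneg (hhnonneg r hr), Real.norm_of_nonneg (hgnonneg r hr)]
    exact hhle r hr
  have hint : IntegrableOn (fun r => r * Real.sqrt (1 + u' r ^ 2)) (Ioo 0 c₀) :=
    hhint.congr_fun (fun r hr => (hEq hr).symm) measurableSet_Ioo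
  refine ⟨hint, ?_⟩
  have hIeq : ∫ r in Ioo (0:ℝ) c₀, r * Real.sqrt (1 + u' r ^ 2) = ∫ r in Ioo (0:ℝ) c₀, h r :=
    setIntegral_congr_fun measurableSet_Ioo hEq
  have hlt : ∫ r in Ioo (0:ℝ) c₀, h r < c₀ ^ 2 := by
    rw [← hgval]
    have hdiff : 0 < ∫ r in Ioo (0:ℝ) c₀, (g r - h r) := by
      rw [setIntegral_pos_iff_support_of_nonneg_ae]
      · have hsub : Ioo (0:ℝ) c₀ ⊆ Function.support (fun r => g r - h r) := by
          intro r hr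
          exact sub_ne_zero.mpr (hhlt r hr).ne'
        have : Function.support (fun r => g r - h r) ∩ Ioo (0:ℝ) c₀ = Ioo (0:ℝ) c₀ :=
          inter_eq_self_of_subset_right hsub
        rw [this, Real.volume_Ioo]
        simp [hc₀]
      · filter_upwards [ae_restrict_mem measurableSet_Ioo] with r hr
        exact sub_nonneg.mpr (hhle r hr)
      · exact hgintIoo.sub hhint
    have := integral_sub hgintIoo hhint
    linarith [this ▸ hdiff]
  rw [hIeq]
  have h2pi : (0:ℝ) < 2 * Real.pi := by positivity
  exact mul_lt_mul_of_pos_left hlt h2pi
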